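/- Let η, r be real numbers with 0 < η < 1 and 0 < r ≤ −(1/2)·ln η. Define H₀ᵖ(θ) = (e^{iθ}/√η + e^{2r}√η)/(e^{2r} + e^{iθ}) and H_Gᵖ(θ) = √(1/η − e^{2r})·√(1 − η)/(e^{2r} + e^{iθ}). Then (1/2)|H₀ᵖ(π)|² + (1/2)|H_Gᵖ(π)|² = [ (1 − η e^{2r})² + (1 − η e^{2r})(1 − η) ] / ( 2 η (e^{2r} − 1)² ). -/

import Mathlib

/-- The on-resonance (θ = π) output phase-quadrature spectrum of a feedback
oscillator with an in-loop phase-sensitive amplifier is finite: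
`(1/2)|H₀ᵖ(π)|² + (1/2)|H_Gᵖ(π)|²
  = [(1 − ηe^{2r})² + (1 − ηe^{2r})(1 − η)]/(2η(e^{2r} − 1)²)`. -/
theorem stmt_15 (η r : ℝ) (hη0 : 0 < η) (hη1 : η < 1)
    (hr0 : 0 < r) (hr : r ≤ -(1 / 2) * Real.log η) :
    (1 / 2) * ‖
        ((Complex.exp ((Real.pi : ℂ) * Complex.I) / (Real.sqrt η : ℂ)
            + ((Real.exp (2 * r) : ℝ) : ℂ) * (Real.sqrt η : ℂ))
          / (((Real.exp (2 * r) : ℝ) : ℂ) + Complex.exp ((Real.pi : ℂ) * Complex.I)))‖ ^ 2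
      + (1 / 2) * ‖
        ((((Real.sqrt (1 / η - Real.exp (2 * r)) * Real.sqrt (1 - η) : ℝ)) : ℂ)
          / (((Real.exp (2 * r) : ℝ) : ℂ) + Complex.exp ((Real.pi : ℂ) * Complex.I)))‖ ^ 2
    = ((1 - η * Real.exp (2 * r)) ^ 2 + (1 - η * Real.exp (2 * r)) * (1 - η))
        / (2 * η * (Real.exp (2 * r) - 1) ^ 2) := by
  rw [Complex.exp_pi_mul_I]
  set E := Real.exp (2 * r) with hE
  set s := Real.sqrt η with hs
  have hspos : 0 < s := Real.sqrt_pos.2 hη0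
  have hs2 : s ^ 2 = η := Real.sq_sqrt hη0.le
  have hE1 : 1 < E := by
    rw [hE]
    calc (1:ℝ) = Real.exp 0 := by simp
    _ < Real.exp (2 * r) := Real.exp_lt_exp.2 (by linarith)
  have hEle : E ≤ 1 / η := by
    rw [hE]
    have h2 : 2 * r ≤ Real.log (1 / η) := by
      rw [Real.log_div one_ne_zero (ne_of_gt hη0), Real.log_one]; linarith
    calc Real.exp (2 * r) ≤ Real.exp (Real.log (1 / η)) := Real.exp_le_exp.2 h2
    _ = 1 / η := Real.exp_log (by positivity)
  have ha2 : (Real.sqrt (1 / η - E) * Real.sqrt (1 - η)) ^ 2 = (1 / η - E) * (1 - η) := by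
    rw [mul_pow, Real.sq_sqrt (by linarith), Real.sq_sqrt (by linarith)]
  have e1 : ((-1) / (s:ℂ) + (E:ℂ) * (s:ℂ)) / ((E:ℂ) + -1)
      = (((E * s - 1 / s) / (E - 1) : ℝ) : ℂ) := by push_cast; ring
  have e2 : (((Real.sqrt (1 / η - E) * Real.sqrt (1 - η) : ℝ)) : ℂ) / ((E:ℂ) + -1)
      = (((Real.sqrt (1 / η - E) * Real.sqrt (1 - η)) / (E - 1) : ℝ) : ℂ) := by
    push_cast; ring
  rw [e1, e2, Complex.norm_real, Complex.norm_real, Real.norm_eq_abs, Real.norm_eq_abs, sq_abs, sq_abs]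
  have hs0 : s ≠ 0 := ne_of_gt hspos
  have hE0 : E - 1 ≠ 0 := by linarith
  have hη0' : η ≠ 0 := ne_of_gt hη0
  have hηE : 0 ≤ 1 - η * E := by
    have h := mul_le_mul_of_nonneg_left hEle hη0.le
    rw [mul_one_div, div_self hη0'] at h
    linarith
  have hb2 : (Real.sqrt (1 - η * E) * Real.sqrt (1 - η)) ^ 2 = (1 - η * E) * (1 - η) := by
    rw [mul_pow, Real.sq_sqrt hηE, Real.sq_sqrt (by linarith)]
  have hss : Real.sqrt η * Real.sqrt η = η := Real.mul_self_sqrt hη0.le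
  have hk : (E * s - 1 / s) ^ 2 = (E * s ^ 2 - 1) ^ 2 / s ^ 2 := by
    field_simp
  rw [div_pow, div_pow, ha2, hk, hs2]
  field_simp
  ring
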